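/- Let e ≥ 3, let ζ be a primitive 2^e-th root of unity, and let i = ζ^{2^{e-2}}. Then the ring of integers of the field ℚ(i(ζ + ζ^{-1})) equals ℤ[i(ζ + ζ^{-1})]. -/

import Mathlib

open IntermediateField
open Polynomial

lemma aux_neg_one {e : ℕ} {x : ℂ} (he : 1 ≤ e) (hx : IsPrimitiveRoot x (2^e)) :
    x ^ 2 ^ (e-1) = -1 := by
  have h : IsPrimitiveRoot (x ^ 2 ^ (e-1)) 2 := by
    refine hx.pow (by positivity) ?_
    rw [← pow_succ]
    congr 1
    omega
  exact h.eq_neg_one_of_two_right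

lemma aux_not_mem {e : ℕ} (he : 3 ≤ e) {ξ : ℂ} (hξ : IsPrimitiveRoot ξ (2^e)) :
    ξ ∉ ℚ⟮ξ - ξ⁻¹⟯ := by
  set η := ξ - ξ⁻¹ with hη
  have hξ0 : ξ ≠ 0 := hξ.ne_zero (by positivity)
  have hintξZ : IsIntegral ℤ ξ := hξ.isIntegral (by positivity)
  have hintξ : IsIntegral ℚ ξ := hintξZ.tower_top
  have hinv : ξ⁻¹ = ξ ^ (2^e - 1) := by
    refine (inv_eq_of_mul_eq_one_right ?_)
    rw [← pow_succ']
    have h1 : 2^e - 1 + 1 = 2^e := by have := Nat.one_le_two_pow (n := e); omega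
    rw [h1, hξ.pow_eq_one]
  have hintη : IsIntegral ℚ η := hintξ.sub (by rw [hinv]; exact hintξ.pow _)
  intro hmem
  have hξself : ξ ∈ ℚ⟮ξ⟯ := mem_adjoin_simple_self ℚ ξ
  have hηL : η ∈ ℚ⟮ξ⟯ := sub_mem hξself (inv_mem hξself)
  have heq : ℚ⟮η⟯ = ℚ⟮ξ⟯ :=
    le_antisymm (adjoin_simple_le_iff.2 hηL) (adjoin_simple_le_iff.2 hmem)
  set m := 2^(e-1) - 1 with hmdef
  have hpow2 : (2:ℕ)^(e-1) = 2 * 2^(e-2) := by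
    rw [← pow_succ']; congr 1; omega
  have h1le : 1 ≤ (2:ℕ)^(e-2) := Nat.one_le_two_pow
  have hm1 : m + 1 = 2^(e-1) := by have := Nat.one_le_two_pow (n := e-1); omega
  have hcop : Nat.Coprime m (2^e) :=
    Nat.Coprime.pow_right _ (Nat.coprime_two_right.2 ⟨2^(e-2) - 1, by omega⟩)
  have hm : IsPrimitiveRoot (ξ ^ m) (2^e) := hξ.pow_of_coprime m hcop
  have hξm_eq : ξ ^ m = -ξ⁻¹ := by
    have hneg := aux_neg_one (e := e) (by omega) hξ
    have hmul : ξ ^ m * ξ = -1 := by rw [← pow_succ, hm1, hneg]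
    field_simp
    linear_combination hmul
  let pb := adjoin.powerBasis hintξ
  have hroot : (aeval (ξ^m)) (minpoly ℚ pb.gen) = 0 := by
    rw [show minpoly ℚ pb.gen = minpoly ℚ ξ from minpoly_gen ℚ ξ,
      ← cyclotomic_eq_minpoly_rat hξ (by positivity), aeval_def, ← eval_map, map_cyclotomic]
    exact hm.isRoot_cyclotomic (by positivity)
  let σ := pb.lift (ξ^m) hroot
  have hσgen : σ pb.gen = ξ^m := pb.lift_gen _ _
  have hσeta : σ ⟨η, hηL⟩ = η := by
    have h1 : (⟨η, hηL⟩ : ℚ⟮ξ⟯) = pb.gen - pb.gen⁻¹ := by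
      apply Subtype.ext
      push_cast
      rfl
    rw [h1, map_sub, map_inv₀, hσgen, hξm_eq, hη, inv_neg, inv_inv]
    ring
  let pbη := adjoin.powerBasis hintη
  have hext : σ.comp (equivOfEq heq).toAlgHom = IntermediateField.val ℚ⟮η⟯ := by
    apply pbη.algHom_ext
    have hgen : pbη.gen = AdjoinSimple.gen ℚ η := rfl
    rw [hgen]
    show σ ((equivOfEq heq) (AdjoinSimple.gen ℚ η)) = _
    have h2 : (equivOfEq heq) (AdjoinSimple.gen ℚ η) = ⟨η, hηL⟩ := by
      apply Subtype.ext; simp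
    rw [h2, hσeta]
    simp
  have hcontra := congrArg (fun f => f ⟨ξ, hmem⟩) hext
  simp only [AlgHom.comp_apply, AlgEquiv.toAlgHom_eq_coe, AlgHom.coe_coe] at hcontra
  have h3 : (equivOfEq heq) (⟨ξ, hmem⟩ : ℚ⟮η⟯) = pb.gen := by
    apply Subtype.ext; simp; rfl
  rw [AlgEquiv.coe_algHom, h3, hσgen] at hcontra
  have h4 : ξ ^ m = ξ := by simpa using hcontra
  rw [hξm_eq] at h4
  have h5 : ξ ^ 4 = 1 := by
    have hsq : ξ * ξ = -1 := by
      field_simp at h4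
      linear_combination -h4
    calc ξ^4 = (ξ*ξ)*(ξ*ξ) := by ring
    _ = 1 := by rw [hsq]; ring
  have h6 : 2^e ∣ 4 := hξ.dvd_of_pow_eq_one 4 h5
  have h7 : (2:ℕ)^e ≤ 4 := Nat.le_of_dvd (by norm_num) h6
  have h8 : (8:ℕ) ≤ 2^e := by
    calc (8:ℕ) = 2^3 := rfl
    _ ≤ 2^e := Nat.pow_le_pow_right (by norm_num) he
  omega

lemma aux_int_closure {e : ℕ} {ξ : ℂ} (hξ : IsPrimitiveRoot ξ (2^e))
    {x : ℂ} (hx : x ∈ ℚ⟮ξ⟯) (hint : IsIntegral ℤ x) :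
    x ∈ Algebra.adjoin ℤ ({ξ} : Set ℂ) := by
  have hintξZ : IsIntegral ℤ ξ := hξ.isIntegral (by positivity)
  have hintξ : IsIntegral ℚ ξ := hintξZ.tower_top
  have hξ' : IsPrimitiveRoot ξ ((2:ℕ+)^e : ℕ+) := by simpa using hξ
  have hgen : IsPrimitiveRoot (AdjoinSimple.gen ℚ ξ) ((2:ℕ+)^e : ℕ+) :=
    IsPrimitiveRoot.coe_submonoidClass_iff.mp hξ'
  have hsubalg : ℚ⟮ξ⟯.toSubalgebra = Algebra.adjoin ℚ {ξ} :=
    adjoin_simple_toSubalgebra_of_isAlgebraic hintξ.isAlgebraic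
  haveI hc1 : IsCyclotomicExtension {2^e} ℚ (Algebra.adjoin ℚ ({ξ} : Set ℂ)) :=
    hξ.adjoin_isCyclotomicExtension ℚ
  haveI : IsCyclotomicExtension {2^e} ℚ ℚ⟮ξ⟯ :=
    IsCyclotomicExtension.equiv _ _ _ (Subalgebra.equivOfEq _ _ hsubalg.symm)
  have hic := IsCyclotomicExtension.Rat.isIntegralClosure_adjoin_singleton_of_prime_pow
    (p := 2) (k := e) (K := ℚ⟮ξ⟯) hgen
  have hintx : IsIntegral ℤ (⟨x, hx⟩ : ℚ⟮ξ⟯) := by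
    have := isIntegral_algebraMap_iff (algebraMap ℚ⟮ξ⟯ ℂ).injective (R := ℤ)
      (x := (⟨x, hx⟩ : ℚ⟮ξ⟯))
    exact this.mp (by exact hint)
  obtain ⟨y, hy⟩ := hic.isIntegral_iff.mp hintx
  have claim : ∀ z : ℚ⟮ξ⟯, z ∈ Algebra.adjoin ℤ {AdjoinSimple.gen ℚ ξ} →
      (z : ℂ) ∈ Algebra.adjoin ℤ ({ξ} : Set ℂ) := by
    intro z hz
    induction hz using Algebra.adjoin_induction with
    | mem w hw =>
        rw [Set.mem_singleton_iff.mp hw]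
        exact Algebra.subset_adjoin rfl
    | algebraMap r =>
        simpa using Subalgebra.algebraMap_mem (Algebra.adjoin ℤ ({ξ} : Set ℂ)) r
    | add u v hu hv ihu ihv => push_cast; exact add_mem ihu ihv
    | mul u v hu hv ihu ihv => push_cast; exact mul_mem ihu ihv
  have hxy : ((y : ℚ⟮ξ⟯) : ℂ) = x := by
    have := congrArg (Subtype.val) hy
    exact this
  rw [← hxy]
  exact claim _ y.2

lemma aux_decomp {ξ η : ℂ} (hsq : ξ ^ 2 = η * ξ + 1) {y : ℂ}
    (hy : y ∈ Algebra.adjoin ℤ ({ξ} : Set ℂ)) :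
    ∃ a b : ℂ, a ∈ Algebra.adjoin ℤ ({η} : Set ℂ) ∧ b ∈ Algebra.adjoin ℤ ({η} : Set ℂ) ∧
      y = a + b * ξ := by
  induction hy using Algebra.adjoin_induction with
  | mem z hz =>
      exact ⟨0, 1, zero_mem _, one_mem _, by simp [Set.mem_singleton_iff.mp hz]⟩
  | algebraMap r =>
      exact ⟨algebraMap ℤ ℂ r, 0, Subalgebra.algebraMap_mem _ _, zero_mem _, by ring⟩
  | add u v hu hv ihu ihv =>
      obtain ⟨a, b, ha, hb, rfl⟩ := ihu
      obtain ⟨c, d, hc, hd, rfl⟩ := ihv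
      exact ⟨a + c, b + d, add_mem ha hc, add_mem hb hd, by ring⟩
  | mul u v hu hv ihu ihv =>
      obtain ⟨a, b, ha, hb, rfl⟩ := ihu
      obtain ⟨c, d, hc, hd, rfl⟩ := ihv
      refine ⟨a * c + b * d, a * d + b * c + b * d * η, ?_, ?_, ?_⟩
      · exact add_mem (mul_mem ha hc) (mul_mem hb hd)
      · exact add_mem (add_mem (mul_mem ha hd) (mul_mem hb hc))
          (mul_mem (mul_mem hb hd) (Algebra.self_mem_adjoin_singleton ℤ η))
      · linear_combination (b * d) * hsq

lemma aux_coprime {e k : ℕ} (hk : Even k) : Nat.Coprime (k + 1) (2 ^ e) := by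
  refine Nat.Coprime.pow_right _ (Nat.coprime_two_right.2 ?_)
  rcases hk with ⟨t, rfl⟩
  exact ⟨t, by omega⟩

/-- For `e ≥ 3`, `ζ` a primitive `2^e`-th root of unity and
`i = ζ^(2^(e-2))`, the ring of integers of `ℚ(i(ζ + ζ⁻¹))` is `ℤ[i(ζ + ζ⁻¹)]`. -/
theorem ringOfIntegers_of_i_mul_zeta_add_zeta_inv
    (e : ℕ) (he : 3 ≤ e) (ζ : ℂ) (hζ : IsPrimitiveRoot ζ (2 ^ e)) :
    {x : ℂ | x ∈ ℚ⟮ζ ^ 2 ^ (e - 2) * (ζ + ζ⁻¹)⟯ ∧ IsIntegral ℤ x} =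
      (Algebra.adjoin ℤ {ζ ^ 2 ^ (e - 2) * (ζ + ζ⁻¹)} : Subalgebra ℤ ℂ) := by
  have hζ0 : ζ ≠ 0 := hζ.ne_zero (by positivity)
  set i : ℂ := ζ ^ 2 ^ (e - 2) with hidef
  set η : ℂ := i * (ζ + ζ⁻¹) with hηdef
  set ξ : ℂ := ζ ^ (2 ^ (e - 2) + 1) with hξdef
  have hcop : Nat.Coprime (2 ^ (e-2) + 1) (2 ^ e) :=
    aux_coprime ((Nat.even_pow).2 ⟨even_two, by omega⟩)
  have hξ : IsPrimitiveRoot ξ (2 ^ e) := hζ.pow_of_coprime _ hcop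
  have hξ0 : ξ ≠ 0 := hξ.ne_zero (by positivity)
  have hi2 : i * i = -1 := by
    rw [hidef, ← pow_add]
    have h1 : 2^(e-2) + 2^(e-2) = 2^(e-1) := by
      rw [show e - 1 = (e-2) + 1 from by omega, pow_succ]; ring
    rw [h1]; exact aux_neg_one (by omega) hζ
  have hξiζ : ξ = i * ζ := by rw [hξdef, hidef, pow_succ]
  have hη : η = ξ - ξ⁻¹ := by
    have hiinv : i⁻¹ = -i := inv_eq_of_mul_eq_one_right (by linear_combination -hi2)
    rw [hηdef, hξiζ, mul_inv, hiinv]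
    ring
  have hsq : ξ ^ 2 = η * ξ + 1 := by
    have h := inv_mul_cancel₀ hξ0
    rw [hη]; linear_combination h
  have hηK : η ∈ ℚ⟮η⟯ := mem_adjoin_simple_self ℚ η
  have hξL : ξ ∈ ℚ⟮ξ⟯ := mem_adjoin_simple_self ℚ ξ
  have hηL : η ∈ ℚ⟮ξ⟯ := by rw [hη]; exact sub_mem hξL (inv_mem hξL)
  have hKL : ℚ⟮η⟯ ≤ ℚ⟮ξ⟯ := adjoin_simple_le_iff.2 hηL
  have hnot : ξ ∉ ℚ⟮η⟯ := by
    have h := aux_not_mem he hξ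
    rwa [← hη] at h
  have hintξZ : IsIntegral ℤ ξ := hξ.isIntegral (by positivity)
  have hinv : ξ⁻¹ = ξ ^ (2^e - 1) := by
    refine (inv_eq_of_mul_eq_one_right ?_)
    rw [← pow_succ']
    have h1 : 2^e - 1 + 1 = 2^e := by have := Nat.one_le_two_pow (n := e); omega
    rw [h1, hξ.pow_eq_one]
  have hintηZ : IsIntegral ℤ η := by
    rw [hη, hinv]; exact hintξZ.sub (hintξZ.pow _)
  have hadj_sub : ∀ z : ℂ, z ∈ Algebra.adjoin ℤ ({η} : Set ℂ) → z ∈ ℚ⟮η⟯ := by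
    intro z hz
    induction hz using Algebra.adjoin_induction with
    | mem w hw => rw [Set.mem_singleton_iff.mp hw]; exact hηK
    | algebraMap r => simpa using intCast_mem ℚ⟮η⟯ r
    | add u v hu hv ihu ihv => exact add_mem ihu ihv
    | mul u v hu hv ihu ihv => exact mul_mem ihu ihv
  have hadj_int : ∀ z : ℂ, z ∈ Algebra.adjoin ℤ ({η} : Set ℂ) → IsIntegral ℤ z := by
    intro z hz
    have hle : Algebra.adjoin ℤ ({η} : Set ℂ) ≤ integralClosure ℤ ℂ :=
      Algebra.adjoin_le (Set.singleton_subset_iff.2 hintηZ)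
    exact hle hz
  ext x
  simp only [Set.mem_setOf_eq, SetLike.mem_coe]
  constructor
  · rintro ⟨hxK, hxint⟩
    have hxL : x ∈ ℚ⟮ξ⟯ := hKL hxK
    obtain ⟨a, b, ha, hb, hxe⟩ := aux_decomp hsq (aux_int_closure hξ hxL hxint)
    have hb0 : b = 0 := by
      by_contra hb0
      apply hnot
      have h1 : ξ = b⁻¹ * (x - a) := by
        rw [hxe]; field_simp; ring
      rw [h1]
      exact mul_mem (inv_mem (hadj_sub b hb)) (sub_mem hxK (hadj_sub a ha))
    rw [hxe, hb0]
    simpa using ha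
  · intro hx
    exact ⟨hadj_sub x hx, hadj_int x hx⟩
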